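/- Let ρ : ℝ → ℝ be continuous and nonnegative with ρ(x) = 0 for |x| > 1 and ∫_ℝ ρ = 1; let a ∈ (0,1), η > 0, I ≥ 0. For p, q ∈ ℕ*, define φ_p^l(x) = √(2/a)·sin(pπx/a) for x ∈ [0,a] and φ_p^l(x) = 0 for x ∈ (a,1], and φ_q^r(x) = √(2/(1−a))·sin(qπ(1−x)/(1−a)) for x ∈ [a,1] and φ_q^r(x) = 0 for x ∈ [0,a). Let P, Q ⊂ ℕ* be finite sets with k = |P| + |Q| ≥ 1, and let Λ = max( {p²π²/a² : p ∈ P} ∪ {q²π²/(1−a)² : q ∈ Q} ). Given coefficients b : P → ℂ and c : Q → ℂ, set u(x) = Σ_{p∈P} b_p φ_p^l(x) + Σ_{q∈Q} c_q φ_q^r(x), and let g(x) = Σ_{p∈P} b_p √(2/a)(pπ/a)cos(pπx/a)·1_{x∈(0,a)} − Σ_{q∈Q} c_q √(2/(1−a))(qπ/(1−a))cos(qπ(1−x)/(1−a))·1_{x∈(a,1)} be the almost-everywhere derivative of u. Then ∫₀¹ ( |g(x)|² + I·η·ρ(η(x−a))·|u(x)|² ) dx ≤ Λ·(1 + 2kI/(min(a,1−a)·η²))·∫₀¹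 |u(x)|² dx. -/

import Mathlib

set_option maxHeartbeats 2000000

open scoped Classical

open MeasureTheory Real

section Helpers

lemma myIntInt {f : ℝ → ℝ} (hm : Measurable f) {M : ℝ} (hb : ∀ x, |f x| ≤ M)
    (s t : ℝ) : IntervalIntegrable f volume s t := by
  rw [intervalIntegrable_iff]
  exact (integrableOn_const measure_Ioc_lt_top.ne enorm_ne_top).mono'
    hm.aestronglyMeasurable (Filter.Eventually.of_forall fun x => hb x)

lemma intInt_sum {ι : Type} (S : Finset ι) {f : ι → ℝ → ℝ} {s t : ℝ}
    (h : ∀ i ∈ S, IntervalIntegrable (f i) volume s t) :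
    IntervalIntegrable (fun x => ∑ i ∈ S, f i x) volume s t := by
  have := IntervalIntegrable.sum S h
  apply this.congr
  exact fun x _ => by simp [Finset.sum_apply]

lemma hzz (w : ℂ) : (w * (starRingEnd ℂ) w).re = ‖w‖^2 := by
  rw [Complex.mul_conj]
  simp [Complex.sq_norm]

lemma int_congr_Ioo {f g : ℝ → ℝ} {s t : ℝ} (hst : s ≤ t)
    (h : ∀ x, s < x → x < t → f x = g x) :
    (∫ x in s..t, f x) = ∫ x in s..t, g x := by
  rw [intervalIntegral.integral_of_le hst, intervalIntegral.integral_of_le hst,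
    MeasureTheory.integral_Ioc_eq_integral_Ioo, MeasureTheory.integral_Ioc_eq_integral_Ioo]
  exact MeasureTheory.setIntegral_congr_fun measurableSet_Ioo (fun x hx => h x hx.1 hx.2)

lemma absIf {c : Prop} [Decidable c] {t M : ℝ} (h : |t| ≤ M) :
    |if c then t else 0| ≤ M := by
  split_ifs
  · exact h
  · simpa using (abs_nonneg t).trans h

lemma int_cos_c {c : ℝ} (hc : c ≠ 0) (L : ℝ) :
    ∫ x in (0:ℝ)..L, Real.cos (c * x) = Real.sin (c * L) / c := by
  rw [intervalIntegral.integral_comp_mul_left Real.cos hc, integral_cos, mul_zero,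
    Real.sin_zero, sub_zero, smul_eq_mul, inv_mul_eq_div]

lemma sin_nat_sub_mul_pi (m n : ℕ) : Real.sin (((m:ℝ) - n) * Real.pi) = 0 := by
  rw [show ((m:ℝ) - n) = (((m:ℤ) - n : ℤ) : ℝ) by push_cast; ring]
  exact Real.sin_int_mul_pi _

end Helpers

lemma sin_orth {L : ℝ} (hL : 0 < L) {m n : ℕ} (hm : 0 < m) (hn : 0 < n) :
    (∫ x in (0:ℝ)..L, Real.sin (m * Real.pi * x / L) * Real.sin (n * Real.pi * x / L))
      = if m = n then L / 2 else 0 := by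
  have hL' : L ≠ 0 := hL.ne'
  have key : ∀ x : ℝ, Real.sin (m * Real.pi * x / L) * Real.sin (n * Real.pi * x / L)
      = (Real.cos (((m:ℝ) - n) * Real.pi / L * x) - Real.cos (((m:ℝ) + n) * Real.pi / L * x)) / 2 := by
    intro x
    have h := Real.cos_sub_cos (((m:ℝ) - n) * Real.pi / L * x) (((m:ℝ) + n) * Real.pi / L * x)
    rw [show ((((m:ℝ) - n) * Real.pi / L * x + ((m:ℝ) + n) * Real.pi / L * x) / 2)
          = m * Real.pi * x / L by ring,
        show ((((m:ℝ) - n) * Real.pi / L * x - ((m:ℝ) + n) * Real.pi / L * x) / 2)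
          = -(n * Real.pi * x / L) by ring,
        Real.sin_neg] at h
    linarith [h]
  rw [intervalIntegral.integral_congr (g := fun x =>
    (Real.cos (((m:ℝ) - n) * Real.pi / L * x) - Real.cos (((m:ℝ) + n) * Real.pi / L * x)) / 2)
    (fun x _ => key x)]
  have hc2 : ((m:ℝ) + n) * Real.pi / L ≠ 0 := by
    have h1 : (0:ℝ) < (m:ℝ) + n := by positivity
    have := Real.pi_pos
    positivity
  have hi2 : IntervalIntegrable (fun x => Real.cos (((m:ℝ) + n) * Real.pi / L * x)) volume 0 L :=
    (Real.continuous_cos.comp (continuous_const.mul continuous_id)).intervalIntegrable 0 L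
  by_cases hmn : m = n
  · subst hmn
    simp only [sub_self, zero_mul, zero_div, Real.cos_zero]
    have hi1 : IntervalIntegrable (fun _ : ℝ => (1:ℝ)) volume 0 L := intervalIntegrable_const
    rw [show (fun x => ((1:ℝ) - Real.cos (((m:ℝ) + m) * Real.pi / L * x)) / 2)
        = fun x => ((1:ℝ) - Real.cos (((m:ℝ) + m) * Real.pi / L * x)) / 2 from rfl]
    simp only [sub_div]
    rw [intervalIntegral.integral_sub (hi1.div_const 2) (hi2.div_const 2),
      intervalIntegral.integral_div, intervalIntegral.integral_div,
      int_cos_c hc2, intervalIntegral.integral_const]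
    rw [show ((m:ℝ) + m) * Real.pi / L * L = ((m + m : ℕ):ℝ) * Real.pi by push_cast; field_simp]
    simp [← Nat.cast_add, Real.sin_nat_mul_pi]
  · have hc1 : ((m:ℝ) - n) * Real.pi / L ≠ 0 := by
      have h1 : (m:ℝ) - n ≠ 0 := sub_ne_zero.2 (by exact_mod_cast hmn)
      have := Real.pi_ne_zero
      exact div_ne_zero (mul_ne_zero h1 this) hL'
    have hi1 : IntervalIntegrable (fun x => Real.cos (((m:ℝ) - n) * Real.pi / L * x)) volume 0 L :=
      (Real.continuous_cos.comp (continuous_const.mul continuous_id)).intervalIntegrable 0 L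
    simp only [sub_div]
    rw [intervalIntegral.integral_sub (hi1.div_const 2) (hi2.div_const 2),
      intervalIntegral.integral_div, intervalIntegral.integral_div,
      int_cos_c hc1, int_cos_c hc2]
    rw [show ((m:ℝ) - n) * Real.pi / L * L = ((m:ℝ) - n) * Real.pi by field_simp,
      show ((m:ℝ) + n) * Real.pi / L * L = ((m + n : ℕ):ℝ) * Real.pi by push_cast; field_simp]
    simp [← Nat.cast_add, Real.sin_nat_mul_pi, sin_nat_sub_mul_pi, hmn]

lemma cos_orth {L : ℝ} (hL : 0 < L) {m n : ℕ} (hm : 0 < m) (hn : 0 < n) :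
    (∫ x in (0:ℝ)..L, Real.cos (m * Real.pi * x / L) * Real.cos (n * Real.pi * x / L))
      = if m = n then L / 2 else 0 := by
  have hL' : L ≠ 0 := hL.ne'
  have key : ∀ x : ℝ, Real.cos (m * Real.pi * x / L) * Real.cos (n * Real.pi * x / L)
      = (Real.cos (((m:ℝ) - n) * Real.pi / L * x) + Real.cos (((m:ℝ) + n) * Real.pi / L * x)) / 2 := by
    intro x
    have h := Real.cos_add_cos (((m:ℝ) - n) * Real.pi / L * x) (((m:ℝ) + n) * Real.pi / L * x)
    rw [show ((((m:ℝ) - n) * Real.pi / L * x + ((m:ℝ) + n) * Real.pi / L * x) / 2)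
          = m * Real.pi * x / L by ring,
        show ((((m:ℝ) - n) * Real.pi / L * x - ((m:ℝ) + n) * Real.pi / L * x) / 2)
          = -(n * Real.pi * x / L) by ring,
        Real.cos_neg] at h
    linarith [h]
  rw [intervalIntegral.integral_congr (g := fun x =>
    (Real.cos (((m:ℝ) - n) * Real.pi / L * x) + Real.cos (((m:ℝ) + n) * Real.pi / L * x)) / 2)
    (fun x _ => key x)]
  have hc2 : ((m:ℝ) + n) * Real.pi / L ≠ 0 := by
    have h1 : (0:ℝ) < (m:ℝ) + n := by positivity
    have := Real.pi_pos
    positivity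
  have hi2 : IntervalIntegrable (fun x => Real.cos (((m:ℝ) + n) * Real.pi / L * x)) volume 0 L :=
    (Real.continuous_cos.comp (continuous_const.mul continuous_id)).intervalIntegrable 0 L
  by_cases hmn : m = n
  · subst hmn
    simp only [sub_self, zero_mul, zero_div, Real.cos_zero]
    have hi1 : IntervalIntegrable (fun _ : ℝ => (1:ℝ)) volume 0 L := intervalIntegrable_const
    simp only [add_div]
    rw [intervalIntegral.integral_add (hi1.div_const 2) (hi2.div_const 2),
      intervalIntegral.integral_div, intervalIntegral.integral_div,
      int_cos_c hc2, intervalIntegral.integral_const]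
    rw [show ((m:ℝ) + m) * Real.pi / L * L = ((m:ℝ) + m) * Real.pi by field_simp]
    simp [← Nat.cast_add, Real.sin_nat_mul_pi]
  · have hc1 : ((m:ℝ) - n) * Real.pi / L ≠ 0 := by
      have h1 : (m:ℝ) - n ≠ 0 := sub_ne_zero.2 (by exact_mod_cast hmn)
      have := Real.pi_ne_zero
      exact div_ne_zero (mul_ne_zero h1 this) hL'
    have hi1 : IntervalIntegrable (fun x => Real.cos (((m:ℝ) - n) * Real.pi / L * x)) volume 0 L :=
      (Real.continuous_cos.comp (continuous_const.mul continuous_id)).intervalIntegrable 0 L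
    simp only [add_div]
    rw [intervalIntegral.integral_add (hi1.div_const 2) (hi2.div_const 2),
      intervalIntegral.integral_div, intervalIntegral.integral_div,
      int_cos_c hc1, int_cos_c hc2]
    rw [show ((m:ℝ) - n) * Real.pi / L * L = ((m:ℝ) - n) * Real.pi by field_simp,
      show ((m:ℝ) + n) * Real.pi / L * L = ((m:ℝ) + n) * Real.pi by field_simp]
    simp [← Nat.cast_add, Real.sin_nat_mul_pi, sin_nat_sub_mul_pi, hmn]

lemma aux_span {ι : Type} [DecidableEq ι] (S : Finset ι)
    (E D : ι → ℝ → ℝ) (z : ι → ℂ) (μf : ι → ℝ) (Λ β cW : ℝ)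
    (hΛ0 : 0 ≤ Λ) (hβ0 : 0 ≤ β) (hcW : 0 ≤ cW)
    (W : ℝ → ℝ) (hW0 : ∀ x, 0 ≤ W x) (hWm : Measurable W) (MW : ℝ) (hWb : ∀ x, |W x| ≤ MW)
    (hWle : (∫ x in (0:ℝ)..1, W x) ≤ cW)
    (hEm : ∀ i, Measurable (E i)) (ME : ι → ℝ) (hEb : ∀ i x, |E i x| ≤ ME i)
    (hDm : ∀ i, Measurable (D i)) (MD : ι → ℝ) (hDb : ∀ i x, |D i x| ≤ MD i)
    (horthE : ∀ i ∈ S, ∀ j ∈ S, (∫ x in (0:ℝ)..1, E i x * E j x) = if i = j then 1 else 0)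
    (horthD : ∀ i ∈ S, ∀ j ∈ S, (∫ x in (0:ℝ)..1, D i x * D j x) = if i = j then μf i else 0)
    (hμΛ : ∀ i ∈ S, μf i ≤ Λ)
    (hEβ : ∀ i ∈ S, ∀ x : ℝ, W x * (E i x)^2 ≤ W x * β)
    (u g : ℝ → ℂ)
    (hu : ∀ x, u x = ∑ i ∈ S, z i * (E i x : ℂ))
    (hg : ∀ x, g x = ∑ i ∈ S, z i * (D i x : ℂ)) :
    (∫ x in (0:ℝ)..1, (‖g x‖^2 + W x * ‖u x‖^2))
      ≤ (Λ + S.card * β * cW) * ∫ x in (0:ℝ)..1, ‖u x‖^2 := by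
  have hueq : u = fun x => ∑ i ∈ S, z i * (E i x : ℂ) := funext hu
  have hgeq : g = fun x => ∑ i ∈ S, z i * (D i x : ℂ) := funext hg
  subst hueq hgeq
  -- pointwise norm expansion
  have hnorm : ∀ (F : ι → ℝ → ℝ) (x : ℝ), ‖∑ i ∈ S, z i * (F i x : ℂ)‖^2
      = ∑ i ∈ S, ∑ j ∈ S, (z i * (starRingEnd ℂ) (z j)).re * (F i x * F j x) := by
    intro F x
    rw [← hzz, map_sum, Finset.sum_mul_sum, Complex.re_sum]
    refine Finset.sum_congr rfl fun i _ => ?_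
    rw [Complex.re_sum]
    refine Finset.sum_congr rfl fun j _ => ?_
    simp only [map_mul, Complex.conj_ofReal]
    simp [Complex.mul_re, Complex.mul_im, Complex.ofReal_re, Complex.ofReal_im]
    ring
  have hMEnn : ∀ i, 0 ≤ ME i := fun i => (abs_nonneg _).trans (hEb i 0)
  have hMDnn : ∀ i, 0 ≤ MD i := fun i => (abs_nonneg _).trans (hDb i 0)
  -- generic integral computation
  have hkey : ∀ (F : ι → ℝ → ℝ) (MF : ι → ℝ), (∀ i, Measurable (F i)) →
      (∀ i x, |F i x| ≤ MF i) → (∀ i, 0 ≤ MF i) →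
      ∀ v : ι → ℝ, (∀ i ∈ S, ∀ j ∈ S,
          (∫ x in (0:ℝ)..1, F i x * F j x) = if i = j then v i else 0) →
      (∫ x in (0:ℝ)..1, ‖∑ i ∈ S, z i * (F i x : ℂ)‖^2)
        = ∑ i ∈ S, ‖z i‖^2 * v i := by
    intro F MF hFm hFb hMF v horth
    have hint : ∀ i j : ι, IntervalIntegrable
        (fun x => (z i * (starRingEnd ℂ) (z j)).re * (F i x * F j x)) volume 0 1 := by
      intro i j
      refine (myIntInt ((hFm i).mul (hFm j)) (M := MF i * MF j) (fun x => ?_) 0 1).const_mul _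
      rw [Pi.mul_apply, abs_mul]
      exact mul_le_mul (hFb i x) (hFb j x) (abs_nonneg _) (hMF i)
    rw [intervalIntegral.integral_congr (fun x _ => hnorm F x),
      intervalIntegral.integral_finset_sum
        (f := fun i x => ∑ j ∈ S, (z i * (starRingEnd ℂ) (z j)).re * (F i x * F j x))
        (fun i _ => (intInt_sum S (fun j _ => hint i j)))]
    refine Finset.sum_congr rfl fun i hi => ?_
    rw [intervalIntegral.integral_finset_sum (fun j _ => hint i j)]
    have : ∀ j ∈ S, (∫ x in (0:ℝ)..1, (z i * (starRingEnd ℂ) (z j)).re * (F i x * F j x))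
        = if i = j then ‖z i‖^2 * v i else 0 := by
      intro j hj
      rw [intervalIntegral.integral_const_mul, horth i hi j hj]
      by_cases h : i = j
      · subst h; rw [if_pos rfl, if_pos rfl, hzz]
      · simp [h]
    rw [Finset.sum_congr rfl this, Finset.sum_ite_eq S i (fun _ => ‖z i‖^2 * v i), if_pos hi]
  have hU : (∫ x in (0:ℝ)..1, ‖∑ i ∈ S, z i * (E i x : ℂ)‖^2) = ∑ i ∈ S, ‖z i‖^2 := by
    simpa using hkey E ME hEm hEb hMEnn (fun _ => 1) horthE
  have hG : (∫ x in (0:ℝ)..1, ‖∑ i ∈ S, z i * (D i x : ℂ)‖^2) = ∑ i ∈ S, ‖z i‖^2 * μf i :=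
    hkey D MD hDm hDb hMDnn μf horthD
  set N := ∑ i ∈ S, ‖z i‖^2 with hN
  have hN0 : 0 ≤ N := Finset.sum_nonneg fun i _ => by positivity
  have hGle : (∫ x in (0:ℝ)..1, ‖∑ i ∈ S, z i * (D i x : ℂ)‖^2) ≤ Λ * N := by
    rw [hG]
    calc ∑ i ∈ S, ‖z i‖^2 * μf i ≤ ∑ i ∈ S, ‖z i‖^2 * Λ :=
          Finset.sum_le_sum fun i hi => mul_le_mul_of_nonneg_left (hμΛ i hi) (by positivity)
      _ = Λ * N := by rw [← Finset.sum_mul, mul_comm]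
  -- pointwise bound for the potential term
  have hpt : ∀ x : ℝ, W x * ‖∑ i ∈ S, z i * (E i x : ℂ)‖^2 ≤ (S.card * β * N) * W x := by
    intro x
    calc W x * ‖∑ i ∈ S, z i * (E i x : ℂ)‖^2
        ≤ W x * (S.card * ∑ i ∈ S, ‖z i‖^2 * (E i x)^2) := by
          refine mul_le_mul_of_nonneg_left ?_ (hW0 x)
          calc ‖∑ i ∈ S, z i * (E i x : ℂ)‖^2
              ≤ (∑ i ∈ S, ‖z i‖ * |E i x|)^2 := by
                refine pow_le_pow_left₀ (norm_nonneg _) ?_ 2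
                refine (norm_sum_le _ _).trans (le_of_eq (Finset.sum_congr rfl fun i _ => ?_))
                rw [norm_mul, Complex.norm_real, Real.norm_eq_abs]
            _ ≤ S.card * ∑ i ∈ S, (‖z i‖ * |E i x|)^2 := sq_sum_le_card_mul_sum_sq
            _ = S.card * ∑ i ∈ S, ‖z i‖^2 * (E i x)^2 := by
                congr 1
                exact Finset.sum_congr rfl fun i _ => by rw [mul_pow, sq_abs]
      _ = S.card * ∑ i ∈ S, ‖z i‖^2 * (W x * (E i x)^2) := by
          have h5 : ∑ i ∈ S, ‖z i‖^2 * (W x * (E i x)^2)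
              = W x * ∑ i ∈ S, ‖z i‖^2 * (E i x)^2 := by
            rw [Finset.mul_sum]
            exact Finset.sum_congr rfl fun i _ => by ring
          rw [h5]; ring
      _ ≤ S.card * ∑ i ∈ S, ‖z i‖^2 * (W x * β) := by
          refine mul_le_mul_of_nonneg_left
            (Finset.sum_le_sum fun i hi =>
              mul_le_mul_of_nonneg_left (hEβ i hi x) (by positivity)) (by positivity)
      _ = (S.card * β * N) * W x := by
          rw [← Finset.sum_mul, ← hN]; ring
  have hMW0 : 0 ≤ MW := (abs_nonneg _).trans (hWb 0)
  have hWint : IntervalIntegrable W volume 0 1 := myIntInt hWm hWb 0 1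
  -- measurability and bounds
  have hmu : Measurable fun x => ‖∑ i ∈ S, z i * (E i x : ℂ)‖^2 := by
    refine Measurable.pow_const (Measurable.norm (Finset.measurable_sum S fun i _ => ?_)) 2
    exact (Complex.measurable_ofReal.comp (hEm i)).const_mul (z i)
  have hmg : Measurable fun x => ‖∑ i ∈ S, z i * (D i x : ℂ)‖^2 := by
    refine Measurable.pow_const (Measurable.norm (Finset.measurable_sum S fun i _ => ?_)) 2
    exact (Complex.measurable_ofReal.comp (hDm i)).const_mul (z i)
  have hub : ∀ x, ‖∑ i ∈ S, z i * (E i x : ℂ)‖ ≤ ∑ i ∈ S, ‖z i‖ * ME i := by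
    intro x
    refine (norm_sum_le _ _).trans (Finset.sum_le_sum fun i _ => ?_)
    rw [norm_mul, Complex.norm_real, Real.norm_eq_abs]
    exact mul_le_mul_of_nonneg_left (hEb i x) (norm_nonneg _)
  have hgb : ∀ x, ‖∑ i ∈ S, z i * (D i x : ℂ)‖ ≤ ∑ i ∈ S, ‖z i‖ * MD i := by
    intro x
    refine (norm_sum_le _ _).trans (Finset.sum_le_sum fun i _ => ?_)
    rw [norm_mul, Complex.norm_real, Real.norm_eq_abs]
    exact mul_le_mul_of_nonneg_left (hDb i x) (norm_nonneg _)
  have husq : ∀ x, |‖∑ i ∈ S, z i * (E i x : ℂ)‖^2| ≤ (∑ i ∈ S, ‖z i‖ * ME i)^2 := by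
    intro x
    rw [abs_of_nonneg (by positivity)]
    exact pow_le_pow_left₀ (norm_nonneg _) (hub x) 2
  have hgsq : ∀ x, |‖∑ i ∈ S, z i * (D i x : ℂ)‖^2| ≤ (∑ i ∈ S, ‖z i‖ * MD i)^2 := by
    intro x
    rw [abs_of_nonneg (by positivity)]
    exact pow_le_pow_left₀ (norm_nonneg _) (hgb x) 2
  have hPotInt : IntervalIntegrable
      (fun x => W x * ‖∑ i ∈ S, z i * (E i x : ℂ)‖^2) volume 0 1 := by
    refine myIntInt (hWm.mul hmu) (M := MW * (∑ i ∈ S, ‖z i‖ * ME i)^2) (fun x => ?_) 0 1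
    rw [Pi.mul_apply, abs_mul]
    exact mul_le_mul (hWb x) (husq x) (abs_nonneg _) hMW0
  have hGint : IntervalIntegrable
      (fun x => ‖∑ i ∈ S, z i * (D i x : ℂ)‖^2) volume 0 1 :=
    myIntInt hmg hgsq 0 1
  have hPotle : (∫ x in (0:ℝ)..1, W x * ‖∑ i ∈ S, z i * (E i x : ℂ)‖^2)
      ≤ S.card * β * N * cW := by
    calc (∫ x in (0:ℝ)..1, W x * ‖∑ i ∈ S, z i * (E i x : ℂ)‖^2)
        ≤ ∫ x in (0:ℝ)..1, (S.card * β * N) * W x :=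
          intervalIntegral.integral_mono_on zero_le_one hPotInt (hWint.const_mul _)
            (fun x _ => hpt x)
      _ = (S.card * β * N) * ∫ x in (0:ℝ)..1, W x :=
          intervalIntegral.integral_const_mul _ _
      _ ≤ S.card * β * N * cW := mul_le_mul_of_nonneg_left hWle (by positivity)
  rw [intervalIntegral.integral_add hGint hPotInt, hU]
  have hsum := add_le_add hGle hPotle
  calc (∫ x in (0:ℝ)..1, ‖∑ i ∈ S, z i * (D i x : ℂ)‖^2)
      + (∫ x in (0:ℝ)..1, W x * ‖∑ i ∈ S, z i * (E i x : ℂ)‖^2)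
      ≤ Λ * N + S.card * β * N * cW := hsum
    _ = (Λ + S.card * β * cW) * N := by ring

/-- Rayleigh-quotient bound on the span of the first split-Laplacian eigenmodes:
for `u = Σ_{p∈P} b_p φ_p^l + Σ_{q∈Q} c_q φ_q^r` with a.e. derivative `g`,
`∫₀¹ (|g|² + I·η·ρ(η(x-a))·|u|²) ≤ Λ·(1 + 2kI/(min(a,1-a)η²))·∫₀¹ |u|²`. -/
theorem stmt_5
    (ρ : ℝ → ℝ) (hρc : Continuous ρ) (hρ0 : ∀ x, 0 ≤ ρ x)
    (hρsupp : ∀ x : ℝ, 1 < |x| → ρ x = 0)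
    (hρint : ∫ x : ℝ, ρ x = 1)
    (a η I : ℝ) (ha : a ∈ Set.Ioo (0 : ℝ) 1) (hη : 0 < η) (hI : 0 ≤ I)
    (P Q : Finset ℕ) (hP : ∀ p ∈ P, 0 < p) (hQ : ∀ q ∈ Q, 0 < q)
    (k : ℕ) (hk : k = P.card + Q.card) (hk1 : 1 ≤ k)
    (Λ : ℝ)
    (hΛ : IsGreatest
      (((fun p : ℕ => (p : ℝ) ^ 2 * Real.pi ^ 2 / a ^ 2) '' (P : Set ℕ)) ∪
        ((fun q : ℕ => (q : ℝ) ^ 2 * Real.pi ^ 2 / (1 - a) ^ 2) '' (Q : Set ℕ))) Λ)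
    (b c : ℕ → ℂ) (u g : ℝ → ℂ)
    (hu : ∀ x : ℝ, u x =
      (∑ p ∈ P, b p *
        (if 0 ≤ x ∧ x ≤ a then
          ((Real.sqrt (2 / a) * Real.sin (p * Real.pi * x / a) : ℝ) : ℂ) else 0)) +
      (∑ q ∈ Q, c q *
        (if a ≤ x ∧ x ≤ 1 then
          ((Real.sqrt (2 / (1 - a)) *
            Real.sin (q * Real.pi * (1 - x) / (1 - a)) : ℝ) : ℂ) else 0)))
    (hg : ∀ x : ℝ, g x =
      (∑ p ∈ P, b p *
        (if 0 < x ∧ x < a then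
          ((Real.sqrt (2 / a) * (p * Real.pi / a) *
            Real.cos (p * Real.pi * x / a) : ℝ) : ℂ) else 0)) -
      (∑ q ∈ Q, c q *
        (if a < x ∧ x < 1 then
          ((Real.sqrt (2 / (1 - a)) * (q * Real.pi / (1 - a)) *
            Real.cos (q * Real.pi * (1 - x) / (1 - a)) : ℝ) : ℂ) else 0))) :
    (∫ x in (0 : ℝ)..1, (‖g x‖ ^ 2 + I * η * ρ (η * (x - a)) * ‖u x‖ ^ 2)) ≤
      Λ * (1 + 2 * k * I / (min a (1 - a) * η ^ 2)) *
        ∫ x in (0 : ℝ)..1, ‖u x‖ ^ 2 := by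
  obtain ⟨ha0, ha1⟩ := ha
  have hL : 0 < 1 - a := by linarith
  have hπ := Real.pi_pos
  set S : Finset (ℕ ⊕ ℕ) := P.disjSum Q with hS
  set z : ℕ ⊕ ℕ → ℂ := Sum.elim b c with hz
  set E : ℕ ⊕ ℕ → ℝ → ℝ := Sum.elim
      (fun p x => if 0 ≤ x ∧ x ≤ a then
        Real.sqrt (2/a) * Real.sin (p * Real.pi * x / a) else 0)
      (fun q x => if a ≤ x ∧ x ≤ 1 then
        Real.sqrt (2/(1-a)) * Real.sin (q * Real.pi * (1-x) / (1-a)) else 0) with hE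
  set D : ℕ ⊕ ℕ → ℝ → ℝ := Sum.elim
      (fun p x => if 0 < x ∧ x < a then
        Real.sqrt (2/a) * (p * Real.pi / a) * Real.cos (p * Real.pi * x / a) else 0)
      (fun q x => -(if a < x ∧ x < 1 then
        Real.sqrt (2/(1-a)) * (q * Real.pi / (1-a)) *
          Real.cos (q * Real.pi * (1-x) / (1-a)) else 0)) with hD
  set μf : ℕ ⊕ ℕ → ℝ := Sum.elim
      (fun p => ((p:ℝ) * Real.pi / a)^2) (fun q => ((q:ℝ) * Real.pi / (1-a))^2) with hμf
  set β : ℝ := 2 * Λ / (min a (1-a) * η^2) with hβ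
  have hminpos : 0 < min a (1-a) := lt_min ha0 hL
  -- Λ is nonnegative
  have hΛ0 : 0 ≤ Λ := by
    have hne : P.Nonempty ∨ Q.Nonempty := by
      by_contra h
      push_neg at h
      rw [h.1, h.2] at hk
      simp at hk
      omega
    rcases hne with ⟨p, hp'⟩ | ⟨q, hq'⟩
    · exact le_trans (by positivity) (hΛ.2 (Or.inl ⟨p, Finset.mem_coe.mpr hp', rfl⟩))
    · exact le_trans (by positivity) (hΛ.2 (Or.inr ⟨q, Finset.mem_coe.mpr hq', rfl⟩))
  have hβ0 : 0 ≤ β := by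
    rw [hβ]
    apply div_nonneg (by linarith) (by positivity)
  -- eigenvalue bound
  have hμΛ : ∀ i ∈ S, μf i ≤ Λ := by
    intro i hi
    rcases i with p | q
    · have hp' : p ∈ P := Finset.inl_mem_disjSum.mp hi
      have := hΛ.2 (Or.inl ⟨p, Finset.mem_coe.mpr hp', rfl⟩)
      simp only [hμf, Sum.elim_inl]
      rw [div_pow, mul_pow]
      exact this
    · have hq' : q ∈ Q := Finset.inr_mem_disjSum.mp hi
      have := hΛ.2 (Or.inr ⟨q, Finset.mem_coe.mpr hq', rfl⟩)
      simp only [hμf, Sum.elim_inr]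
      rw [div_pow, mul_pow]
      exact this
  -- measurability and bounds of E and D
  have hsin1 : ∀ t : ℝ, |Real.sin t| ≤ 1 := fun t =>
    abs_le.mpr ⟨Real.neg_one_le_sin t, Real.sin_le_one t⟩
  have hcos1 : ∀ t : ℝ, |Real.cos t| ≤ 1 := fun t =>
    abs_le.mpr ⟨Real.neg_one_le_cos t, Real.cos_le_one t⟩
  have hEm : ∀ i, Measurable (E i) := by
    intro i
    rcases i with p | q <;> simp only [hE, Sum.elim_inl, Sum.elim_inr]
    · exact Measurable.ite
        (((measurableSet_le measurable_const measurable_id).inter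
          (measurableSet_le measurable_id measurable_const)))
        (by fun_prop) measurable_const
    · exact Measurable.ite
        (((measurableSet_le measurable_const measurable_id).inter
          (measurableSet_le measurable_id measurable_const)))
        (by fun_prop) measurable_const
  have hDm : ∀ i, Measurable (D i) := by
    intro i
    rcases i with p | q <;> simp only [hD, Sum.elim_inl, Sum.elim_inr]
    · exact Measurable.ite
        (((measurableSet_lt measurable_const measurable_id).inter
          (measurableSet_lt measurable_id measurable_const)))
        (by fun_prop) measurable_const
    · exact (Measurable.ite
        (((measurableSet_lt measurable_const measurable_id).inter
          (measurableSet_lt measurable_id measurable_const)))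
        (by fun_prop) measurable_const).neg
  set ME : ℕ ⊕ ℕ → ℝ := Sum.elim (fun _ => Real.sqrt (2/a))
    (fun _ => Real.sqrt (2/(1-a))) with hME
  set MD : ℕ ⊕ ℕ → ℝ := Sum.elim (fun p => Real.sqrt (2/a) * ((p:ℝ) * Real.pi / a))
    (fun q => Real.sqrt (2/(1-a)) * ((q:ℝ) * Real.pi / (1-a))) with hMD
  have hEb : ∀ i x, |E i x| ≤ ME i := by
    intro i x
    rcases i with p | q <;> simp only [hE, hME, Sum.elim_inl, Sum.elim_inr] <;>
      refine absIf ?_ <;> rw [abs_mul] <;>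
      [rw [abs_of_nonneg (Real.sqrt_nonneg (2/a))];
       rw [abs_of_nonneg (Real.sqrt_nonneg (2/(1-a)))]] <;>
      exact mul_le_of_le_one_right (Real.sqrt_nonneg _) (hsin1 _)
  have hDb : ∀ i x, |D i x| ≤ MD i := by
    intro i x
    rcases i with p | q <;> simp only [hD, hMD, Sum.elim_inl, Sum.elim_inr]
    · refine absIf ?_
      rw [abs_mul, abs_mul, abs_of_nonneg (Real.sqrt_nonneg _),
        abs_of_nonneg (by positivity : (0:ℝ) ≤ (p:ℝ) * Real.pi / a)]
      exact mul_le_of_le_one_right (by positivity) (hcos1 _)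
    · rw [abs_neg]
      refine absIf ?_
      rw [abs_mul, abs_mul, abs_of_nonneg (Real.sqrt_nonneg _),
        abs_of_nonneg (by positivity : (0:ℝ) ≤ (q:ℝ) * Real.pi / (1-a))]
      exact mul_le_of_le_one_right (by positivity) (hcos1 _)
  have hEEint : ∀ i j (s t : ℝ), IntervalIntegrable (fun x => E i x * E j x) volume s t := by
    intro i j s t
    refine myIntInt ((hEm i).mul (hEm j)) (M := ME i * ME j) (fun x => ?_) s t
    rw [Pi.mul_apply, abs_mul]
    exact mul_le_mul (hEb i x) (hEb j x) (abs_nonneg _) ((abs_nonneg _).trans (hEb i 0))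
  have hDDint : ∀ i j (s t : ℝ), IntervalIntegrable (fun x => D i x * D j x) volume s t := by
    intro i j s t
    refine myIntInt ((hDm i).mul (hDm j)) (M := MD i * MD j) (fun x => ?_) s t
    rw [Pi.mul_apply, abs_mul]
    exact mul_le_mul (hDb i x) (hDb j x) (abs_nonneg _) ((abs_nonneg _).trans (hDb i 0))
  -- representation of u and g
  have hu' : ∀ x, u x = ∑ i ∈ S, z i * (E i x : ℂ) := by
    intro x
    rw [hu x, hS, Finset.sum_disjSum]
    congr 1
    · exact Finset.sum_congr rfl fun p _ => by
        simp [hz, hE, apply_ite Complex.ofReal]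
    · exact Finset.sum_congr rfl fun q _ => by
        simp [hz, hE, apply_ite Complex.ofReal]
  have hg' : ∀ x, g x = ∑ i ∈ S, z i * (D i x : ℂ) := by
    intro x
    rw [hg x, hS, Finset.sum_disjSum, sub_eq_add_neg]
    congr 1
    · exact Finset.sum_congr rfl fun p _ => by
        simp [hz, hD, apply_ite Complex.ofReal]
    · rw [← Finset.sum_neg_distrib]
      exact Finset.sum_congr rfl fun q _ => by
        simp [hz, hD, apply_ite Complex.ofReal, mul_neg]
  -- orthonormality of E
  have horthE : ∀ i ∈ S, ∀ j ∈ S,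
      (∫ x in (0:ℝ)..1, E i x * E j x) = if i = j then 1 else 0 := by
    intro i hi j hj
    rcases i with p | q <;> rcases j with p' | q'
    · -- left-left
      have hp := hP p (Finset.inl_mem_disjSum.mp hi)
      have hp' := hP p' (Finset.inl_mem_disjSum.mp hj)
      rw [← intervalIntegral.integral_add_adjacent_intervals
        (hEEint (Sum.inl p) (Sum.inl p') 0 a) (hEEint (Sum.inl p) (Sum.inl p') a 1)]
      have h2 : (∫ x in a..(1:ℝ), E (Sum.inl p) x * E (Sum.inl p') x) = 0 := by
        rw [int_congr_Ioo (g := fun _ => (0:ℝ)) ha1.le ?_, intervalIntegral.integral_zero]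
        intro x hx1 hx2
        simp only [hE, Sum.elim_inl]
        rw [if_neg (fun h => absurd h.2 (not_le.2 hx1)), zero_mul]
      have h3 : (∫ x in (0:ℝ)..a, E (Sum.inl p) x * E (Sum.inl p') x)
          = 2/a * ∫ x in (0:ℝ)..a,
              Real.sin (p * Real.pi * x / a) * Real.sin (p' * Real.pi * x / a) := by
        rw [← intervalIntegral.integral_const_mul]
        refine int_congr_Ioo ha0.le fun x hx1 hx2 => ?_
        simp only [hE, Sum.elim_inl]
        rw [if_pos ⟨hx1.le, hx2.le⟩, if_pos ⟨hx1.le, hx2.le⟩,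
          show (Real.sqrt (2/a) * Real.sin (p * Real.pi * x / a)) *
              (Real.sqrt (2/a) * Real.sin (p' * Real.pi * x / a))
            = (Real.sqrt (2/a) * Real.sqrt (2/a)) *
              (Real.sin (p * Real.pi * x / a) * Real.sin (p' * Real.pi * x / a)) from by ring,
          Real.mul_self_sqrt (by positivity)]
      rw [h2, h3, add_zero, sin_orth ha0 hp hp']
      by_cases hpp : p = p'
      · simp only [hpp, if_pos rfl, Sum.inl.injEq, if_true]
        field_simp
      · simp [hpp]
    · -- left-right : pointwise zero
      have hzero : ∀ x, E (Sum.inl p) x * E (Sum.inr q') x = 0 := by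
        intro x
        simp only [hE, Sum.elim_inl, Sum.elim_inr]
        by_cases h1 : 0 ≤ x ∧ x ≤ a
        · by_cases h2 : a ≤ x ∧ x ≤ 1
          · have hxa : x = a := le_antisymm h1.2 h2.1
            rw [if_pos h1, hxa, show (p:ℝ) * Real.pi * a / a = (p:ℝ) * Real.pi from by
              field_simp, Real.sin_nat_mul_pi, mul_zero, zero_mul]
          · rw [if_neg h2, mul_zero]
        · rw [if_neg h1, zero_mul]
      rw [intervalIntegral.integral_congr (g := fun _ => (0:ℝ)) (fun x _ => hzero x),
        intervalIntegral.integral_zero, if_neg (by simp)]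
    · -- right-left : pointwise zero
      have hzero : ∀ x, E (Sum.inr q) x * E (Sum.inl p') x = 0 := by
        intro x
        simp only [hE, Sum.elim_inl, Sum.elim_inr]
        by_cases h1 : a ≤ x ∧ x ≤ 1
        · by_cases h2 : 0 ≤ x ∧ x ≤ a
          · have hxa : x = a := le_antisymm h2.2 h1.1
            rw [if_pos h1, hxa, show (q:ℝ) * Real.pi * (1-a) / (1-a) = (q:ℝ) * Real.pi from by
              field_simp, Real.sin_nat_mul_pi, mul_zero, zero_mul]
          · rw [if_neg h2, mul_zero]
        · rw [if_neg h1, zero_mul]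
      rw [intervalIntegral.integral_congr (g := fun _ => (0:ℝ)) (fun x _ => hzero x),
        intervalIntegral.integral_zero, if_neg (by simp)]
    · -- right-right
      have hq := hQ q (Finset.inr_mem_disjSum.mp hi)
      have hq' := hQ q' (Finset.inr_mem_disjSum.mp hj)
      rw [← intervalIntegral.integral_add_adjacent_intervals
        (hEEint (Sum.inr q) (Sum.inr q') 0 a) (hEEint (Sum.inr q) (Sum.inr q') a 1)]
      have h2 : (∫ x in (0:ℝ)..a, E (Sum.inr q) x * E (Sum.inr q') x) = 0 := by
        rw [int_congr_Ioo (g := fun _ => (0:ℝ)) ha0.le ?_, intervalIntegral.integral_zero]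
        intro x hx1 hx2
        simp only [hE, Sum.elim_inr]
        rw [if_neg (fun h => absurd h.1 (not_le.2 hx2)), zero_mul]
      have h3 : (∫ x in a..(1:ℝ), E (Sum.inr q) x * E (Sum.inr q') x)
          = 2/(1-a) * ∫ x in a..(1:ℝ), (fun y =>
              Real.sin (q * Real.pi * y / (1-a)) * Real.sin (q' * Real.pi * y / (1-a))) (1 - x) := by
        rw [← intervalIntegral.integral_const_mul]
        refine int_congr_Ioo ha1.le fun x hx1 hx2 => ?_
        simp only [hE, Sum.elim_inr]
        rw [if_pos ⟨hx1.le, hx2.le⟩, if_pos ⟨hx1.le, hx2.le⟩]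
        show _ = 2/(1-a) * (Real.sin (q * Real.pi * (1-x) / (1-a)) *
          Real.sin (q' * Real.pi * (1-x) / (1-a)))
        rw [show (Real.sqrt (2/(1-a)) * Real.sin (q * Real.pi * (1-x) / (1-a))) *
              (Real.sqrt (2/(1-a)) * Real.sin (q' * Real.pi * (1-x) / (1-a)))
            = (Real.sqrt (2/(1-a)) * Real.sqrt (2/(1-a))) *
              (Real.sin (q * Real.pi * (1-x) / (1-a)) *
                Real.sin (q' * Real.pi * (1-x) / (1-a))) from by ring,
          Real.mul_self_sqrt (by positivity)]
      have hsub := intervalIntegral.integral_comp_sub_left (a := a) (b := 1)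
        (fun y => Real.sin (q * Real.pi * y / (1-a)) * Real.sin (q' * Real.pi * y / (1-a))) 1
      rw [show (1:ℝ) - 1 = 0 from by norm_num] at hsub
      rw [h2, h3, zero_add, hsub, sin_orth hL hq hq']
      by_cases hqq : q = q'
      · simp only [hqq, if_pos rfl, Sum.inr.injEq, if_true]
        field_simp
      · simp [hqq]
  -- orthogonality of D
  have horthD : ∀ i ∈ S, ∀ j ∈ S,
      (∫ x in (0:ℝ)..1, D i x * D j x) = if i = j then μf i else 0 := by
    intro i hi j hj
    rcases i with p | q <;> rcases j with p' | q'
    · -- left-left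
      have hp := hP p (Finset.inl_mem_disjSum.mp hi)
      have hp' := hP p' (Finset.inl_mem_disjSum.mp hj)
      rw [← intervalIntegral.integral_add_adjacent_intervals
        (hDDint (Sum.inl p) (Sum.inl p') 0 a) (hDDint (Sum.inl p) (Sum.inl p') a 1)]
      have h2 : (∫ x in a..(1:ℝ), D (Sum.inl p) x * D (Sum.inl p') x) = 0 := by
        rw [int_congr_Ioo (g := fun _ => (0:ℝ)) ha1.le ?_, intervalIntegral.integral_zero]
        intro x hx1 hx2
        simp only [hD, Sum.elim_inl]
        rw [if_neg (fun h => absurd h.2 (not_lt.2 hx1.le)), zero_mul]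
      have h3 : (∫ x in (0:ℝ)..a, D (Sum.inl p) x * D (Sum.inl p') x)
          = 2/a * ((p:ℝ) * Real.pi / a * ((p':ℝ) * Real.pi / a)) * ∫ x in (0:ℝ)..a,
              Real.cos (p * Real.pi * x / a) * Real.cos (p' * Real.pi * x / a) := by
        rw [← intervalIntegral.integral_const_mul]
        refine int_congr_Ioo ha0.le fun x hx1 hx2 => ?_
        simp only [hD, Sum.elim_inl]
        rw [if_pos ⟨hx1, hx2⟩, if_pos ⟨hx1, hx2⟩,
          show (Real.sqrt (2/a) * ((p:ℝ) * Real.pi / a) * Real.cos (p * Real.pi * x / a)) *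
              (Real.sqrt (2/a) * ((p':ℝ) * Real.pi / a) * Real.cos (p' * Real.pi * x / a))
            = (Real.sqrt (2/a) * Real.sqrt (2/a)) * ((p:ℝ) * Real.pi / a * ((p':ℝ) * Real.pi / a)) *
              (Real.cos (p * Real.pi * x / a) * Real.cos (p' * Real.pi * x / a)) from by ring,
          Real.mul_self_sqrt (by positivity)]
      rw [h2, h3, add_zero, cos_orth ha0 hp hp']
      by_cases hpp : p = p'
      · simp only [hpp, if_pos rfl, Sum.inl.injEq, if_true, hμf, Sum.elim_inl]
        rw [sq]
        field_simp
      · simp [hpp]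
    · -- left-right
      have hzero : ∀ x, D (Sum.inl p) x * D (Sum.inr q') x = 0 := by
        intro x
        simp only [hD, Sum.elim_inl, Sum.elim_inr]
        by_cases h1 : 0 < x ∧ x < a
        · rw [if_neg (show ¬(a < x ∧ x < 1) from fun h => absurd h.1 (not_lt.2 h1.2.le)),
            neg_zero, mul_zero]
        · rw [if_neg h1, zero_mul]
      rw [intervalIntegral.integral_congr (g := fun _ => (0:ℝ)) (fun x _ => hzero x),
        intervalIntegral.integral_zero, if_neg (by simp)]
    · -- right-left
      have hzero : ∀ x, D (Sum.inr q) x * D (Sum.inl p') x = 0 := by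
        intro x
        simp only [hD, Sum.elim_inl, Sum.elim_inr]
        by_cases h1 : a < x ∧ x < 1
        · rw [if_neg (show ¬(0 < x ∧ x < a) from fun h => absurd h.2 (not_lt.2 h1.1.le)),
            mul_zero]
        · rw [if_neg h1, neg_zero, zero_mul]
      rw [intervalIntegral.integral_congr (g := fun _ => (0:ℝ)) (fun x _ => hzero x),
        intervalIntegral.integral_zero, if_neg (by simp)]
    · -- right-right
      have hq := hQ q (Finset.inr_mem_disjSum.mp hi)
      have hq' := hQ q' (Finset.inr_mem_disjSum.mp hj)
      rw [← intervalIntegral.integral_add_adjacent_intervals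
        (hDDint (Sum.inr q) (Sum.inr q') 0 a) (hDDint (Sum.inr q) (Sum.inr q') a 1)]
      have h2 : (∫ x in (0:ℝ)..a, D (Sum.inr q) x * D (Sum.inr q') x) = 0 := by
        rw [int_congr_Ioo (g := fun _ => (0:ℝ)) ha0.le ?_, intervalIntegral.integral_zero]
        intro x hx1 hx2
        simp only [hD, Sum.elim_inr]
        rw [if_neg (show ¬(a < x ∧ x < 1) from fun h => absurd h.1 (not_lt.2 hx2.le)),
          if_neg (show ¬(a < x ∧ x < 1) from fun h => absurd h.1 (not_lt.2 hx2.le)),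
          neg_zero, zero_mul]
      have h3 : (∫ x in a..(1:ℝ), D (Sum.inr q) x * D (Sum.inr q') x)
          = 2/(1-a) * ((q:ℝ) * Real.pi / (1-a) * ((q':ℝ) * Real.pi / (1-a))) *
            ∫ x in a..(1:ℝ), (fun y =>
              Real.cos (q * Real.pi * y / (1-a)) * Real.cos (q' * Real.pi * y / (1-a))) (1 - x) := by
        rw [← intervalIntegral.integral_const_mul]
        refine int_congr_Ioo ha1.le fun x hx1 hx2 => ?_
        simp only [hD, Sum.elim_inr]
        rw [if_pos ⟨hx1, hx2⟩, if_pos ⟨hx1, hx2⟩]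
        show _ = 2/(1-a) * ((q:ℝ) * Real.pi / (1-a) * ((q':ℝ) * Real.pi / (1-a))) *
          (Real.cos (q * Real.pi * (1-x) / (1-a)) * Real.cos (q' * Real.pi * (1-x) / (1-a)))
        rw [neg_mul_neg,
          show (Real.sqrt (2/(1-a)) * ((q:ℝ) * Real.pi / (1-a)) *
                Real.cos (q * Real.pi * (1-x) / (1-a))) *
              (Real.sqrt (2/(1-a)) * ((q':ℝ) * Real.pi / (1-a)) *
                Real.cos (q' * Real.pi * (1-x) / (1-a)))
            = (Real.sqrt (2/(1-a)) * Real.sqrt (2/(1-a))) *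
              ((q:ℝ) * Real.pi / (1-a) * ((q':ℝ) * Real.pi / (1-a))) *
              (Real.cos (q * Real.pi * (1-x) / (1-a)) *
                Real.cos (q' * Real.pi * (1-x) / (1-a))) from by ring,
          Real.mul_self_sqrt (by positivity)]
      have hsub := intervalIntegral.integral_comp_sub_left (a := a) (b := 1)
        (fun y => Real.cos (q * Real.pi * y / (1-a)) * Real.cos (q' * Real.pi * y / (1-a))) 1
      rw [show (1:ℝ) - 1 = 0 from by norm_num] at hsub
      rw [h2, h3, zero_add, hsub, cos_orth hL hq hq']
      by_cases hqq : q = q'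
      · simp only [hqq, if_pos rfl, Sum.inr.injEq, if_true, hμf, Sum.elim_inr]
        rw [sq]
        field_simp
      · simp [hqq]
  -- pointwise bound near the interface
  have hEβ : ∀ i ∈ S, ∀ x : ℝ,
      I * η * ρ (η * (x - a)) * (E i x)^2 ≤ I * η * ρ (η * (x - a)) * β := by
    intro i hi x
    by_cases hz0 : ρ (η * (x - a)) = 0
    · rw [hz0]; simp
    · have hsupp : |η * (x - a)| ≤ 1 := not_lt.mp (fun h => hz0 (hρsupp _ h))
      have hx2 : (x - a)^2 ≤ 1 / η^2 := by
        have h1 : (η * (x - a))^2 ≤ 1 := by nlinarith [abs_le.mp hsupp]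
        rw [le_div_iff₀ (by positivity)]
        nlinarith
      have hβexp : β = 2 / min a (1-a) * (Λ * (1/η^2)) := by
        rw [hβ]; field_simp
      have hEsq : (E i x)^2 ≤ β := by
        rcases i with p | q
        · have hμ : ((p:ℝ) * Real.pi / a)^2 ≤ Λ := by
            have h := hμΛ (Sum.inl p) hi
            simpa [hμf] using h
          simp only [hE, Sum.elim_inl]
          by_cases hc : 0 ≤ x ∧ x ≤ a
          · rw [if_pos hc]
            have harg : (p:ℝ) * Real.pi * x / a
                = (p:ℝ) * Real.pi * (x - a) / a + (p:ℤ) * Real.pi := by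
              push_cast
              field_simp
              ring
            have habs : |Real.sin ((p:ℝ) * Real.pi * x / a)|
                = |Real.sin ((p:ℝ) * Real.pi * (x - a) / a)| := by
              rw [harg, Real.sin_add_int_mul_pi, abs_mul, zpow_natCast, abs_pow, abs_neg,
                abs_one, one_pow, one_mul]
            have hsin : Real.sin ((p:ℝ) * Real.pi * x / a)^2
                ≤ ((p:ℝ) * Real.pi * (x - a) / a)^2 := by
              calc Real.sin ((p:ℝ) * Real.pi * x / a)^2
                  = |Real.sin ((p:ℝ) * Real.pi * x / a)|^2 := (sq_abs _).symm
                _ = |Real.sin ((p:ℝ) * Real.pi * (x - a) / a)|^2 := by rw [habs]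
                _ = Real.sin ((p:ℝ) * Real.pi * (x - a) / a)^2 := sq_abs _
                _ ≤ _ := Real.sin_sq_le_sq
            calc (Real.sqrt (2/a) * Real.sin ((p:ℝ) * Real.pi * x / a))^2
                = 2/a * Real.sin ((p:ℝ) * Real.pi * x / a)^2 := by
                  rw [mul_pow, Real.sq_sqrt (by positivity)]
              _ ≤ 2/a * ((p:ℝ) * Real.pi * (x - a) / a)^2 :=
                  mul_le_mul_of_nonneg_left hsin (by positivity)
              _ = 2/a * (((p:ℝ) * Real.pi / a)^2 * (x - a)^2) := by ring
              _ ≤ 2/(min a (1-a)) * (Λ * (1/η^2)) := by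
                  have hstep1 : ((p:ℝ) * Real.pi / a)^2 * (x - a)^2 ≤ Λ * (1/η^2) := by
                    have := mul_le_mul hμ hx2 (sq_nonneg _) hΛ0
                    simpa [one_div] using this
                  have hstep2 : 2/a ≤ 2/(min a (1-a)) := by
                    rw [div_le_div_iff₀ ha0 hminpos]
                    nlinarith [min_le_left a (1-a)]
                  exact mul_le_mul hstep2 hstep1 (by positivity) (by positivity)
              _ = β := hβexp.symm
          · rw [if_neg hc]
            simpa using hβ0
        · have hμ : ((q:ℝ) * Real.pi / (1-a))^2 ≤ Λ := by
            have h := hμΛ (Sum.inr q) hi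
            simpa [hμf] using h
          simp only [hE, Sum.elim_inr]
          by_cases hc : a ≤ x ∧ x ≤ 1
          · rw [if_pos hc]
            have harg : (q:ℝ) * Real.pi * (1-x) / (1-a)
                = (q:ℝ) * Real.pi * (a - x) / (1-a) + (q:ℤ) * Real.pi := by
              push_cast
              field_simp
              ring
            have habs : |Real.sin ((q:ℝ) * Real.pi * (1-x) / (1-a))|
                = |Real.sin ((q:ℝ) * Real.pi * (a - x) / (1-a))| := by
              rw [harg, Real.sin_add_int_mul_pi, abs_mul, zpow_natCast, abs_pow, abs_neg,
                abs_one, one_pow, one_mul]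
            have hsin : Real.sin ((q:ℝ) * Real.pi * (1-x) / (1-a))^2
                ≤ ((q:ℝ) * Real.pi * (a - x) / (1-a))^2 := by
              calc Real.sin ((q:ℝ) * Real.pi * (1-x) / (1-a))^2
                  = |Real.sin ((q:ℝ) * Real.pi * (1-x) / (1-a))|^2 := (sq_abs _).symm
                _ = |Real.sin ((q:ℝ) * Real.pi * (a - x) / (1-a))|^2 := by rw [habs]
                _ = Real.sin ((q:ℝ) * Real.pi * (a - x) / (1-a))^2 := sq_abs _
                _ ≤ _ := Real.sin_sq_le_sq
            calc (Real.sqrt (2/(1-a)) * Real.sin ((q:ℝ) * Real.pi * (1-x) / (1-a)))^2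
                = 2/(1-a) * Real.sin ((q:ℝ) * Real.pi * (1-x) / (1-a))^2 := by
                  rw [mul_pow, Real.sq_sqrt (by positivity)]
              _ ≤ 2/(1-a) * ((q:ℝ) * Real.pi * (a - x) / (1-a))^2 :=
                  mul_le_mul_of_nonneg_left hsin (by positivity)
              _ = 2/(1-a) * (((q:ℝ) * Real.pi / (1-a))^2 * (x - a)^2) := by ring
              _ ≤ 2/(min a (1-a)) * (Λ * (1/η^2)) := by
                  have hstep1 : ((q:ℝ) * Real.pi / (1-a))^2 * (x - a)^2 ≤ Λ * (1/η^2) := by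
                    have := mul_le_mul hμ hx2 (sq_nonneg _) hΛ0
                    simpa [one_div] using this
                  have hstep2 : 2/(1-a) ≤ 2/(min a (1-a)) := by
                    rw [div_le_div_iff₀ hL hminpos]
                    nlinarith [min_le_right a (1-a)]
                  exact mul_le_mul hstep2 hstep1 (by positivity) (by positivity)
              _ = β := hβexp.symm
          · rw [if_neg hc]
            simpa using hβ0
      have hWx : 0 ≤ I * η * ρ (η * (x - a)) := mul_nonneg (mul_nonneg hI hη.le) (hρ0 _)
      exact mul_le_mul_of_nonneg_left hEsq hWx
  -- the potential function
  have hW0 : ∀ x : ℝ, 0 ≤ I * η * ρ (η * (x - a)) :=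
    fun x => mul_nonneg (mul_nonneg hI hη.le) (hρ0 _)
  have hWm : Measurable fun x : ℝ => I * η * ρ (η * (x - a)) :=
    ((hρc.comp (continuous_const.mul (continuous_id.sub continuous_const))).measurable).const_mul
      (I * η)
  have hcs : HasCompactSupport ρ := by
    apply HasCompactSupport.intro (isCompact_Icc (a := (-1:ℝ)) (b := 1))
    intro x hx
    apply hρsupp
    rw [Set.mem_Icc] at hx
    push_neg at hx
    rcases lt_or_ge x (-1) with h | h
    · rw [abs_of_neg (by linarith)]; linarith
    · have h2 := hx h
      rw [abs_of_pos (by linarith)]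
      exact h2
  obtain ⟨Mρ, hMρ⟩ := hρc.bounded_above_of_compact_support hcs
  have hWb : ∀ x : ℝ, |I * η * ρ (η * (x - a))| ≤ I * η * Mρ := by
    intro x
    rw [abs_of_nonneg (hW0 x)]
    refine mul_le_mul_of_nonneg_left ?_ (by positivity)
    calc ρ (η * (x - a)) ≤ |ρ (η * (x - a))| := le_abs_self _
      _ ≤ Mρ := by simpa [Real.norm_eq_abs] using hMρ (η * (x - a))
  have hcomp : Continuous fun x : ℝ => ρ (η * (x - a)) :=
    hρc.comp (continuous_const.mul (continuous_id.sub continuous_const))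
  have hcscomp : HasCompactSupport fun x : ℝ => ρ (η * (x - a)) := by
    apply HasCompactSupport.intro (isCompact_Icc (a := a - 1/η) (b := a + 1/η))
    intro x hx
    apply hρsupp
    rw [Set.mem_Icc] at hx
    push_neg at hx
    rcases lt_or_ge x (a - 1/η) with h | h
    · have h1 : 1/η < a - x := by linarith
      have h2 : η * (1/η) < η * (a - x) := mul_lt_mul_of_pos_left h1 hη
      rw [mul_one_div, div_self hη.ne'] at h2
      rw [abs_of_neg (show η * (x - a) < 0 by nlinarith)]
      nlinarith
    · have h3 := hx h
      have h1 : 1/η < x - a := by linarith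
      have h2 : η * (1/η) < η * (x - a) := mul_lt_mul_of_pos_left h1 hη
      rw [mul_one_div, div_self hη.ne'] at h2
      rw [abs_of_pos (by nlinarith)]
      exact h2
  have hρcompInt : Integrable fun x : ℝ => ρ (η * (x - a)) :=
    hcomp.integrable_of_hasCompactSupport hcscomp
  have hWval : (∫ x : ℝ, ρ (η * (x - a))) = 1/η := by
    calc (∫ x : ℝ, ρ (η * (x - a))) = ∫ x : ℝ, (fun y => ρ (η * y)) (x - a) := rfl
      _ = ∫ y : ℝ, ρ (η * y) := integral_sub_right_eq_self (fun y => ρ (η * y)) a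
      _ = |η⁻¹| • ∫ y : ℝ, ρ y := Measure.integral_comp_mul_left ρ η
      _ = 1/η := by
          rw [hρint, smul_eq_mul, mul_one, abs_of_pos (inv_pos.mpr hη), one_div]
  have hWle : (∫ x in (0:ℝ)..1, I * η * ρ (η * (x - a))) ≤ I := by
    have h1 : (∫ x in (0:ℝ)..1, I * η * ρ (η * (x - a)))
        = (I * η) * ∫ x in (0:ℝ)..1, ρ (η * (x - a)) :=
      intervalIntegral.integral_const_mul _ _
    have h2 : (∫ x in (0:ℝ)..1, ρ (η * (x - a))) ≤ 1/η := by
      rw [intervalIntegral.integral_of_le zero_le_one, ← hWval]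
      exact setIntegral_le_integral hρcompInt (Filter.Eventually.of_forall fun x => hρ0 _)
    rw [h1]
    calc (I * η) * ∫ x in (0:ℝ)..1, ρ (η * (x - a)) ≤ (I * η) * (1/η) :=
        mul_le_mul_of_nonneg_left h2 (by positivity)
      _ = I := by field_simp
  -- apply the abstract lemma
  have main := aux_span S E D z μf Λ β I hΛ0 hβ0 hI
    (fun x => I * η * ρ (η * (x - a))) hW0 hWm (I * η * Mρ) hWb hWle
    hEm ME hEb hDm MD hDb horthE horthD hμΛ hEβ u g hu' hg'
  have hcard : ((S.card : ℕ) : ℝ) = (k : ℝ) := by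
    rw [hS, Finset.card_disjSum, hk]
  have hconst : Λ + (S.card : ℝ) * β * I = Λ * (1 + 2 * k * I / (min a (1-a) * η^2)) := by
    rw [hcard, hβ]
    have h1 : min a (1-a) ≠ 0 := hminpos.ne'
    have h2 : η ≠ 0 := hη.ne'
    field_simp
  calc (∫ x in (0:ℝ)..1, (‖g x‖^2 + I * η * ρ (η * (x - a)) * ‖u x‖^2))
      ≤ (Λ + (S.card : ℝ) * β * I) * ∫ x in (0:ℝ)..1, ‖u x‖^2 := main
    _ = _ := by rw [hconst]
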